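/- arXiv:1405.3126 — 2 statements merged into one kernel-verified Lean document; each statement's English description precedes it below -/
import Mathlib

section
/- Let q = 2m with m ≥ 2 an integer, let Ω be the set of all nonzero vectors in {0,1}^q, and fix t ∈ [0,1). Let p_ev1 assign mass (n_m + n_{m+1})⁻¹ to each point of Ω_m ∪ Ω_{m+1} and mass 0 elsewhere, and let p_ev2 assign mass n_m⁻¹ to each point of Ω_m and mass 0 elsewhere. Then: g(p_ev1) = {(m+1)/(2m+1)}·1_q and g(p_ev2) = (1/2)·1_q; both H(p_ev1) and H(p_ev2) are invertible; {H(p_ev1)}⁻¹ = [2(2m+1)/(m+1)]·{I_q − q⁻¹J_q + [(2m+1)/(1 + 4m(m+1)(1−t))]·q⁻¹J_q}; and {H(p_ev2)}⁻¹ = [2(2m−1)/m]·(I_q − q⁻¹J_q) + [2/(m(1−t))]·q⁻¹J_q, where 1_q is the q×1 vector of ones, I_q the identity matrix of order q, and J_q = 1_q1_qᵀ. -/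
open Matrix BigOperators Finset

noncomputable section

/-- The binary design point (0/1 vector) with support `S`. -/
def ind {q : ℕ} (S : Finset (Fin q)) : Fin q → ℝ := fun i => if i ∈ S then 1 else 0

/-- A design measure on the nonzero binary vectors of length `q`, indexed by
their supports: nonnegative masses summing to 1, with zero mass on the zero vector. -/
def designMeasureB {q : ℕ} (p : Finset (Fin q) → ℝ) : Prop :=
  p ∅ = 0 ∧ (∀ S, 0 ≤ p S) ∧ ∑ S : Finset (Fin q), p S = 1

/-- G(p) = Σ p_x x xᵀ. -/
def GmatB {q : ℕ} (p : Finset (Fin q) → ℝ) : Matrix (Fin q) (Fin q) ℝ :=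
  ∑ S : Finset (Fin q), p S • Matrix.vecMulVec (ind S) (ind S)

/-- g(p) = Σ p_x x. -/
def gvecB {q : ℕ} (p : Finset (Fin q) → ℝ) : Fin q → ℝ :=
  ∑ S : Finset (Fin q), p S • ind S

/-- H(p) = G(p) − t g(p) g(p)ᵀ. -/
def HmatB {q : ℕ} (t : ℝ) (p : Finset (Fin q) → ℝ) : Matrix (Fin q) (Fin q) ℝ :=
  GmatB p - t • Matrix.vecMulVec (gvecB p) (gvecB p)

/-- The all-ones q×q matrix J_q. -/
def Jmat (q : ℕ) : Matrix (Fin q) (Fin q) ℝ := Matrix.of fun _ _ => 1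

end

lemma count_mem {q : ℕ} (j : ℕ) (i : Fin q) :
    ((univ : Finset (Finset (Fin q))).filter fun S => S.card = j + 1 ∧ i ∈ S).card
      = (q - 1).choose j := by
  have h : ((univ : Finset (Fin q)).erase i).card = q - 1 := by
    simp [Finset.card_erase_of_mem]
  rw [← h, ← Finset.card_powersetCard]
  refine Finset.card_nbij' (fun S => S.erase i) (fun T => insert i T) ?_ ?_ ?_ ?_
  · intro S hS
    simp only [mem_coe, mem_filter, mem_univ, true_and] at hS
    simp only [mem_coe, Finset.mem_powersetCard]
    refine ⟨fun x hx => ?_, ?_⟩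
    · simp only [Finset.mem_erase] at hx ⊢; exact ⟨hx.1, mem_univ x⟩
    · rw [Finset.card_erase_of_mem hS.2, hS.1]; omega
  · intro T hT
    simp only [mem_coe, Finset.mem_powersetCard] at hT
    have hiT : i ∉ T := fun h => by have := hT.1 h; simp [Finset.mem_erase] at this
    simp [mem_filter, Finset.card_insert_of_notMem hiT, hT.2]
  · intro S hS; simp only [mem_filter, mem_coe] at hS; exact Finset.insert_erase hS.2.2
  · intro T hT
    simp only [Finset.mem_powersetCard, mem_coe] at hT
    have hiT : i ∉ T := fun h => by have := hT.1 h; simp at this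
    exact Finset.erase_insert hiT

lemma count_pair {q : ℕ} (j : ℕ) (i k : Fin q) (hik : i ≠ k) :
    ((univ : Finset (Finset (Fin q))).filter fun S => S.card = j + 2 ∧ i ∈ S ∧ k ∈ S).card
      = (q - 2).choose j := by
  have h : (((univ : Finset (Fin q)).erase i).erase k).card = q - 2 := by
    have hk : k ∈ (univ : Finset (Fin q)).erase i := by simp [Ne.symm hik]
    rw [Finset.card_erase_of_mem hk, Finset.card_erase_of_mem (mem_univ i), Finset.card_univ,
      Fintype.card_fin]
    omega
  rw [← h, ← Finset.card_powersetCard]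
  refine Finset.card_nbij' (fun S => (S.erase i).erase k) (fun T => insert i (insert k T))
    ?_ ?_ ?_ ?_
  · intro S hS
    simp only [mem_filter, mem_univ, true_and, mem_coe] at hS
    simp only [mem_coe, Finset.mem_powersetCard]
    have hkS : k ∈ S.erase i := by simp [Finset.mem_erase, Ne.symm hik, hS.2.2]
    refine ⟨fun x hx => ?_, ?_⟩
    · simp only [Finset.mem_erase] at hx ⊢
      exact ⟨hx.1, hx.2.1, mem_univ x⟩
    · rw [Finset.card_erase_of_mem hkS, Finset.card_erase_of_mem hS.2.1, hS.1]; omega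
  · intro T hT
    simp only [Finset.mem_powersetCard, mem_coe] at hT
    have hkT : k ∉ T := fun h => by have := hT.1 h; simp [Finset.mem_erase] at this
    have hiT : i ∉ T := fun h => by have := hT.1 h; simp [Finset.mem_erase] at this
    have hik' : i ∉ insert k T := by simp [Finset.mem_insert, hik, hiT]
    simp only [mem_coe, mem_filter, mem_univ, true_and]
    refine ⟨?_, by simp, by simp⟩
    rw [Finset.card_insert_of_notMem hik', Finset.card_insert_of_notMem hkT, hT.2]
  · intro S hS
    simp only [mem_filter, mem_coe] at hS
    show insert i (insert k ((S.erase i).erase k)) = S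
    have hkS : k ∈ S.erase i := by simp [Finset.mem_erase, Ne.symm hik, hS.2.2.2]
    rw [Finset.insert_erase hkS, Finset.insert_erase hS.2.2.1]
  · intro T hT
    simp only [Finset.mem_powersetCard, mem_coe] at hT
    have hkT : k ∉ T := fun h => by have := hT.1 h; simp at this
    have hiT : i ∉ T := fun h => by have := hT.1 h; simp at this
    have hik' : i ∉ insert k T := by simp [Finset.mem_insert, hik, hiT]
    show ((insert i (insert k T)).erase i).erase k = T
    rw [Finset.erase_insert hik', Finset.erase_insert hkT]

lemma sum_card_mem {q : ℕ} (j J : ℕ) (hJ : J = j + 1) (c : ℝ) (i : Fin q) :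
    ∑ S : Finset (Fin q), (if S.card = J then c else 0) * (if i ∈ S then (1:ℝ) else 0)
      = ((q - 1).choose j : ℝ) * c := by
  subst hJ
  have e : ∀ S : Finset (Fin q),
      (if S.card = j + 1 then c else 0) * (if i ∈ S then (1:ℝ) else 0)
        = if S.card = j + 1 ∧ i ∈ S then c else 0 := by
    intro S; by_cases h1 : S.card = j + 1 <;> by_cases h2 : i ∈ S <;> simp [h1, h2]
  rw [Finset.sum_congr rfl fun S _ => e S, Finset.sum_ite, Finset.sum_const,
    Finset.sum_const_zero, add_zero, count_mem j i, nsmul_eq_mul]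

lemma sum_card_pair {q : ℕ} (j J : ℕ) (hJ : J = j + 2) (c : ℝ) (i k : Fin q) (hik : i ≠ k) :
    ∑ S : Finset (Fin q), (if S.card = J then c else 0)
        * ((if i ∈ S then (1:ℝ) else 0) * (if k ∈ S then (1:ℝ) else 0))
      = ((q - 2).choose j : ℝ) * c := by
  subst hJ
  have e : ∀ S : Finset (Fin q),
      (if S.card = j + 2 then c else 0)
          * ((if i ∈ S then (1:ℝ) else 0) * (if k ∈ S then (1:ℝ) else 0))
        = if S.card = j + 2 ∧ i ∈ S ∧ k ∈ S then c else 0 := by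
    intro S
    by_cases h1 : S.card = j + 2 <;> by_cases h2 : i ∈ S <;> by_cases h3 : k ∈ S <;>
      simp [h1, h2, h3]
  rw [Finset.sum_congr rfl fun S _ => e S, Finset.sum_ite, Finset.sum_const,
    Finset.sum_const_zero, add_zero, count_pair j i k hik, nsmul_eq_mul]

lemma ite_or_split {q : ℕ} (c : ℝ) (j1 j2 : ℕ) (hne : j1 ≠ j2) (S : Finset (Fin q)) :
    (if S.card = j1 ∨ S.card = j2 then c else 0)
      = (if S.card = j1 then c else 0) + (if S.card = j2 then c else 0) := by
  by_cases h1 : S.card = j1 <;> by_cases h2 : S.card = j2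
  · exact absurd (h1.symm.trans h2) hne
  · simp only [h1, h2, if_true, if_false, or_false, if_pos rfl, add_zero]
    rw [if_pos (Or.inl trivial), if_neg (fun h : j1 = j2 => hne h), add_zero]
  · simp only [h1, h2, if_false, zero_add]
    rw [if_pos (Or.inr trivial), if_neg (fun h : j2 = j1 => hne h.symm), if_pos trivial, zero_add]
  · simp [h1, h2]

lemma gvecB_apply {q : ℕ} (p : Finset (Fin q) → ℝ) (i : Fin q) :
    gvecB p i = ∑ S : Finset (Fin q), p S * (if i ∈ S then 1 else 0) := by
  simp [gvecB, Finset.sum_apply, ind]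

lemma HmatB_apply {q : ℕ} (t : ℝ) (p : Finset (Fin q) → ℝ) (i k : Fin q) :
    HmatB t p i k = (∑ S : Finset (Fin q),
        p S * ((if i ∈ S then (1:ℝ) else 0) * (if k ∈ S then 1 else 0)))
      - t * (gvecB p i * gvecB p k) := by
  simp [HmatB, GmatB, Matrix.sub_apply, Matrix.sum_apply, Matrix.smul_apply,
    Matrix.vecMulVec_apply, ind, smul_eq_mul, mul_assoc]

lemma Hmat_form {q : ℕ} (t : ℝ) (p : Finset (Fin q) → ℝ) (dg off : ℝ)
    (hd : ∀ i : Fin q, ∑ S : Finset (Fin q), p S * (if i ∈ S then (1:ℝ) else 0) = dg)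
    (ho : ∀ i k : Fin q, i ≠ k →
      ∑ S : Finset (Fin q), p S * ((if i ∈ S then (1:ℝ) else 0) * (if k ∈ S then 1 else 0))
        = off) :
    HmatB t p = (dg - off) • (1 : Matrix (Fin q) (Fin q) ℝ) + (off - t * dg^2) • Jmat q := by
  have hg : ∀ i, gvecB p i = dg := fun i => by rw [gvecB_apply]; exact hd i
  ext i k
  rw [HmatB_apply, Matrix.add_apply, Matrix.smul_apply, Matrix.smul_apply, hg, hg]
  by_cases h : i = k
  · subst h
    have e : ∀ S : Finset (Fin q),
        p S * ((if i ∈ S then (1:ℝ) else 0) * (if i ∈ S then 1 else 0))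
          = p S * (if i ∈ S then (1:ℝ) else 0) := by
      intro S; split_ifs <;> ring
    rw [Finset.sum_congr rfl fun S _ => e S, hd]
    simp only [Jmat, Matrix.of_apply, Matrix.one_apply_eq, smul_eq_mul, mul_one]
    ring
  · rw [ho i k h]
    simp only [Jmat, Matrix.of_apply, Matrix.one_apply_ne h, smul_eq_mul, mul_one, mul_zero]
    ring

lemma Jmat_mul_Jmat (q : ℕ) : Jmat q * Jmat q = (q : ℝ) • Jmat q := by
  ext i k
  simp [Jmat, Matrix.mul_apply, Matrix.smul_apply, smul_eq_mul]

lemma inv_form (q : ℕ) (a b c d : ℝ) (h1 : a * c = 1)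
    (h2 : a * d + b * c + b * d * q = 0) :
    (a • (1 : Matrix (Fin q) (Fin q) ℝ) + b • Jmat q)
      * (c • (1 : Matrix (Fin q) (Fin q) ℝ) + d • Jmat q) = 1 := by
  have key : (a • (1 : Matrix (Fin q) (Fin q) ℝ) + b • Jmat q)
      * (c • (1 : Matrix (Fin q) (Fin q) ℝ) + d • Jmat q)
      = (a*c) • (1 : Matrix (Fin q) (Fin q) ℝ) + (a*d + b*c + b*d*q) • Jmat q := by
    simp only [Matrix.add_mul, Matrix.mul_add, Matrix.smul_mul, Matrix.mul_smul,
      Matrix.one_mul, Matrix.mul_one, Jmat_mul_Jmat, smul_smul]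
    module
  rw [key, h1, h2, one_smul, zero_smul, add_zero]

lemma nat_s1 (n : ℕ) : (2*n+4).choose (n+2) = (2*n+3).choose (n+1) + (2*n+3).choose (n+2) := by
  have h := Nat.choose_succ_succ (2*n+3) (n+1)
  simp only [Nat.succ_eq_add_one] at h
  rwa [show 2*n+3+1 = 2*n+4 from by omega, show n+1+1 = n+2 from by omega] at h

lemma nat_s2 (n : ℕ) : (2*n+3).choose (n+2) = (2*n+3).choose (n+1) := by
  have h := Nat.choose_symm (show n+2 ≤ 2*n+3 by omega)
  rw [show 2*n+3-(n+2) = n+1 from by omega] at h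
  exact h.symm

lemma nat_s3 (n : ℕ) : (2*n+4).choose (n+3) * (n+3) = (2*n+4).choose (n+2) * (n+2) := by
  have h := Nat.choose_succ_right_eq (2*n+4) (n+2)
  rwa [show 2*n+4-(n+2) = n+2 from by omega, show n+2+1 = n+3 from by omega] at h

lemma nat_s4 (n : ℕ) : (2*n+3) * ((2*n+2).choose n) = (2*n+3).choose (n+1) * (n+1) := by
  have h := Nat.add_one_mul_choose_eq (2*n+2) n
  rwa [show 2*n+2+1 = 2*n+3 from by omega] at h

lemma nat_s5 (n : ℕ) : (2*n+2).choose n + (2*n+2).choose (n+1) = (2*n+3).choose (n+1) := by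
  have h := Nat.choose_succ_succ (2*n+2) n
  simp only [Nat.succ_eq_add_one] at h
  rw [show 2*n+2+1 = 2*n+3 from by omega] at h
  exact h.symm

lemma nat_s6 (n : ℕ) : 0 < (2*n+4).choose (n+2) := Nat.choose_pos (by omega)

lemma real_P (n : ℕ) : ((2*n+3).choose (n+1) : ℝ) = ((2*n+4).choose (n+2) : ℝ) / 2 := by
  have h1 : (((2*n+4).choose (n+2) : ℕ) : ℝ)
      = ((2*n+3).choose (n+1) : ℝ) + ((2*n+3).choose (n+2) : ℝ) := by
    exact_mod_cast congrArg (Nat.cast : ℕ → ℝ) (nat_s1 n)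
  have h2 : (((2*n+3).choose (n+2) : ℕ) : ℝ) = ((2*n+3).choose (n+1) : ℝ) := by
    exact_mod_cast congrArg (Nat.cast : ℕ → ℝ) (nat_s2 n)
  linarith

lemma real_P2 (n : ℕ) : ((2*n+3).choose (n+2) : ℝ) = ((2*n+4).choose (n+2) : ℝ) / 2 := by
  have h2 : (((2*n+3).choose (n+2) : ℕ) : ℝ) = ((2*n+3).choose (n+1) : ℝ) := by
    exact_mod_cast congrArg (Nat.cast : ℕ → ℝ) (nat_s2 n)
  rw [h2]; exact real_P n

lemma real_B (n : ℕ) : ((2*n+4).choose (n+3) : ℝ)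
    = ((2*n+4).choose (n+2) : ℝ) * ((n:ℝ)+2) / ((n:ℝ)+3) := by
  have h : ((2*n+4).choose (n+3) : ℝ) * ((n:ℝ)+3)
      = ((2*n+4).choose (n+2) : ℝ) * ((n:ℝ)+2) := by
    exact_mod_cast congrArg (Nat.cast : ℕ → ℝ) (nat_s3 n)
  have h3 : ((n:ℝ)+3) ≠ 0 := by positivity
  field_simp
  linarith [h]

lemma real_Q0 (n : ℕ) : ((2*n+2).choose n : ℝ)
    = ((2*n+4).choose (n+2) : ℝ) * ((n:ℝ)+1) / (2*(2*(n:ℝ)+3)) := by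
  have h : (2*(n:ℝ)+3) * ((2*n+2).choose n : ℝ)
      = ((2*n+3).choose (n+1) : ℝ) * ((n:ℝ)+1) := by
    exact_mod_cast congrArg (Nat.cast : ℕ → ℝ) (nat_s4 n)
  rw [real_P n] at h
  have h3 : (2*(2*(n:ℝ)+3)) ≠ 0 := by positivity
  rw [eq_div_iff h3]
  linear_combination 2 * h

lemma real_Q (n : ℕ) : ((2*n+2).choose n : ℝ) + ((2*n+2).choose (n+1) : ℝ)
    = ((2*n+4).choose (n+2) : ℝ) / 2 := by
  have h : ((2*n+2).choose n : ℝ) + ((2*n+2).choose (n+1) : ℝ)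
      = ((2*n+3).choose (n+1) : ℝ) := by
    exact_mod_cast congrArg (Nat.cast : ℕ → ℝ) (nat_s5 n)
  rw [h, real_P n]

lemma real_A_pos (n : ℕ) : (0:ℝ) < ((2*n+4).choose (n+2) : ℝ) := by
  exact_mod_cast nat_s6 n

lemma ev1_diag (n : ℕ) (i : Fin (2*(n+2))) :
    ∑ S : Finset (Fin (2*(n+2))),
        (if S.card = n+2 ∨ S.card = n+2+1 then
          ((Nat.choose (2*(n+2)) (n+2) : ℝ) + (Nat.choose (2*(n+2)) (n+2+1) : ℝ))⁻¹ else 0)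
          * (if i ∈ S then (1:ℝ) else 0)
      = ((n:ℝ)+3)/(2*(n:ℝ)+5) := by
  have split : ∀ S : Finset (Fin (2*(n+2))),
      (if S.card = n+2 ∨ S.card = n+2+1 then
          ((Nat.choose (2*(n+2)) (n+2) : ℝ) + (Nat.choose (2*(n+2)) (n+2+1) : ℝ))⁻¹ else 0)
          * (if i ∈ S then (1:ℝ) else 0)
        = (if S.card = n+2 then
            ((Nat.choose (2*(n+2)) (n+2) : ℝ) + (Nat.choose (2*(n+2)) (n+2+1) : ℝ))⁻¹ else 0)
            * (if i ∈ S then (1:ℝ) else 0)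
          + (if S.card = n+2+1 then
            ((Nat.choose (2*(n+2)) (n+2) : ℝ) + (Nat.choose (2*(n+2)) (n+2+1) : ℝ))⁻¹ else 0)
            * (if i ∈ S then (1:ℝ) else 0) := fun S => by
    rw [ite_or_split _ (n+2) (n+2+1) (by omega) S, add_mul]
  rw [Finset.sum_congr rfl fun S _ => split S, Finset.sum_add_distrib,
    sum_card_mem (n+1) (n+2) (by omega) _ i, sum_card_mem (n+2) (n+2+1) (by omega) _ i,
    show 2*(n+2)-1 = 2*n+3 from by omega, show 2*(n+2) = 2*n+4 from by ring,
    show n+2+1 = n+3 from by omega]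
  rw [real_P n, real_P2 n, real_B n]
  have hA := real_A_pos n
  have h3 : ((n:ℝ)+3) ≠ 0 := by positivity
  have h5 : (2*(n:ℝ)+5) ≠ 0 := by positivity
  have hne : (((2*n+4).choose (n+2) : ℝ)
      + ((2*n+4).choose (n+2) : ℝ) * ((n:ℝ)+2) / ((n:ℝ)+3)) ≠ 0 := by
    have : (0:ℝ) ≤ ((2*n+4).choose (n+2) : ℝ) * ((n:ℝ)+2) / ((n:ℝ)+3) := by positivity
    linarith
  field_simp
  ring

lemma ev1_off (n : ℕ) (i k : Fin (2*(n+2))) (hik : i ≠ k) :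
    ∑ S : Finset (Fin (2*(n+2))),
        (if S.card = n+2 ∨ S.card = n+2+1 then
          ((Nat.choose (2*(n+2)) (n+2) : ℝ) + (Nat.choose (2*(n+2)) (n+2+1) : ℝ))⁻¹ else 0)
          * ((if i ∈ S then (1:ℝ) else 0) * (if k ∈ S then (1:ℝ) else 0))
      = ((n:ℝ)+3)/(2*(2*(n:ℝ)+5)) := by
  have split : ∀ S : Finset (Fin (2*(n+2))),
      (if S.card = n+2 ∨ S.card = n+2+1 then
          ((Nat.choose (2*(n+2)) (n+2) : ℝ) + (Nat.choose (2*(n+2)) (n+2+1) : ℝ))⁻¹ else 0)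
          * ((if i ∈ S then (1:ℝ) else 0) * (if k ∈ S then (1:ℝ) else 0))
        = (if S.card = n+2 then
            ((Nat.choose (2*(n+2)) (n+2) : ℝ) + (Nat.choose (2*(n+2)) (n+2+1) : ℝ))⁻¹ else 0)
            * ((if i ∈ S then (1:ℝ) else 0) * (if k ∈ S then (1:ℝ) else 0))
          + (if S.card = n+2+1 then
            ((Nat.choose (2*(n+2)) (n+2) : ℝ) + (Nat.choose (2*(n+2)) (n+2+1) : ℝ))⁻¹ else 0)
            * ((if i ∈ S then (1:ℝ) else 0) * (if k ∈ S then (1:ℝ) else 0)) := fun S => by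
    rw [ite_or_split _ (n+2) (n+2+1) (by omega) S, add_mul]
  rw [Finset.sum_congr rfl fun S _ => split S, Finset.sum_add_distrib,
    sum_card_pair n (n+2) (by omega) _ i k hik, sum_card_pair (n+1) (n+2+1) (by omega) _ i k hik,
    show 2*(n+2)-2 = 2*n+2 from by omega, show 2*(n+2) = 2*n+4 from by ring,
    show n+2+1 = n+3 from by omega, ← add_mul, real_Q n, real_B n]
  have hA := real_A_pos n
  have h3 : ((n:ℝ)+3) ≠ 0 := by positivity
  have h5 : (2*(2*(n:ℝ)+5)) ≠ 0 := by positivity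
  have hne : (((2*n+4).choose (n+2) : ℝ)
      + ((2*n+4).choose (n+2) : ℝ) * ((n:ℝ)+2) / ((n:ℝ)+3)) ≠ 0 := by
    have : (0:ℝ) ≤ ((2*n+4).choose (n+2) : ℝ) * ((n:ℝ)+2) / ((n:ℝ)+3) := by positivity
    linarith
  field_simp
  ring

lemma ev2_diag (n : ℕ) (i : Fin (2*(n+2))) :
    ∑ S : Finset (Fin (2*(n+2))),
        (if S.card = n+2 then ((Nat.choose (2*(n+2)) (n+2) : ℝ))⁻¹ else 0)
          * (if i ∈ S then (1:ℝ) else 0)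
      = 1/2 := by
  rw [sum_card_mem (n+1) (n+2) (by omega) _ i,
    show 2*(n+2)-1 = 2*n+3 from by omega, show 2*(n+2) = 2*n+4 from by ring, real_P n]
  have hA := real_A_pos n
  have hA0 : ((2*n+4).choose (n+2) : ℝ) ≠ 0 := ne_of_gt hA
  field_simp

lemma ev2_off (n : ℕ) (i k : Fin (2*(n+2))) (hik : i ≠ k) :
    ∑ S : Finset (Fin (2*(n+2))),
        (if S.card = n+2 then ((Nat.choose (2*(n+2)) (n+2) : ℝ))⁻¹ else 0)
          * ((if i ∈ S then (1:ℝ) else 0) * (if k ∈ S then (1:ℝ) else 0))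
      = ((n:ℝ)+1)/(2*(2*(n:ℝ)+3)) := by
  rw [sum_card_pair n (n+2) (by omega) _ i k hik,
    show 2*(n+2)-2 = 2*n+2 from by omega, show 2*(n+2) = 2*n+4 from by ring, real_Q0 n]
  have hA := real_A_pos n
  have hA0 : ((2*n+4).choose (n+2) : ℝ) ≠ 0 := ne_of_gt hA
  have h3 : (2*(2*(n:ℝ)+3)) ≠ 0 := by positivity
  field_simp

lemma ev1_form (n : ℕ) (t : ℝ) :
    HmatB t (fun S : Finset (Fin (2*(n+2))) =>
        if S.card = n+2 ∨ S.card = n+2+1 then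
          ((Nat.choose (2*(n+2)) (n+2) : ℝ) + (Nat.choose (2*(n+2)) (n+2+1) : ℝ))⁻¹ else 0)
      = (((n:ℝ)+3)/(2*(n:ℝ)+5) - ((n:ℝ)+3)/(2*(2*(n:ℝ)+5))) • 1
        + (((n:ℝ)+3)/(2*(2*(n:ℝ)+5)) - t * (((n:ℝ)+3)/(2*(n:ℝ)+5))^2) • Jmat (2*(n+2)) :=
  Hmat_form t _ _ _ (fun i => ev1_diag n i) (fun i k hik => ev1_off n i k hik)

lemma ev2_form (n : ℕ) (t : ℝ) :
    HmatB t (fun S : Finset (Fin (2*(n+2))) =>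
        if S.card = n+2 then ((Nat.choose (2*(n+2)) (n+2) : ℝ))⁻¹ else 0)
      = ((1:ℝ)/2 - ((n:ℝ)+1)/(2*(2*(n:ℝ)+3))) • 1
        + (((n:ℝ)+1)/(2*(2*(n:ℝ)+3)) - t * ((1:ℝ)/2)^2) • Jmat (2*(n+2)) :=
  Hmat_form t _ _ _ (fun i => ev2_diag n i) (fun i k hik => ev2_off n i k hik)

lemma inv_aIbJ (q : ℕ) (a b c d : ℝ) (h1 : a * c = 1)
    (h2 : a * d + b * c + b * d * q = 0) :
    (a • (1 : Matrix (Fin q) (Fin q) ℝ) + b • Jmat q)⁻¹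
      = c • (1 : Matrix (Fin q) (Fin q) ℝ) + d • Jmat q :=
  Matrix.inv_eq_right_inv (inv_form q a b c d h1 h2)

lemma isUnit_aIbJ (q : ℕ) (a b c d : ℝ) (h1 : a * c = 1)
    (h2 : a * d + b * c + b * d * q = 0) :
    IsUnit (a • (1 : Matrix (Fin q) (Fin q) ℝ) + b • Jmat q).det :=
  Matrix.isUnit_det_of_right_inverse (inv_form q a b c d h1 h2)


theorem statement_16 (m : ℕ) (hm : 2 ≤ m) (t : ℝ) (ht0 : 0 ≤ t) (ht1 : t < 1) :
    gvecB (fun S : Finset (Fin (2*m)) =>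
        if S.card = m ∨ S.card = m + 1 then
          ((Nat.choose (2*m) m : ℝ) + (Nat.choose (2*m) (m+1) : ℝ))⁻¹ else 0)
      = (fun _ => ((m : ℝ) + 1) / (2*(m : ℝ) + 1))
    ∧ gvecB (fun S : Finset (Fin (2*m)) =>
          if S.card = m then ((Nat.choose (2*m) m : ℝ))⁻¹ else 0)
        = (fun _ => (1/2 : ℝ))
    ∧ IsUnit (HmatB t (fun S : Finset (Fin (2*m)) =>
        if S.card = m ∨ S.card = m + 1 then
          ((Nat.choose (2*m) m : ℝ) + (Nat.choose (2*m) (m+1) : ℝ))⁻¹ else 0)).det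
    ∧ IsUnit (HmatB t (fun S : Finset (Fin (2*m)) =>
        if S.card = m then ((Nat.choose (2*m) m : ℝ))⁻¹ else 0)).det
    ∧ (HmatB t (fun S : Finset (Fin (2*m)) =>
        if S.card = m ∨ S.card = m + 1 then
          ((Nat.choose (2*m) m : ℝ) + (Nat.choose (2*m) (m+1) : ℝ))⁻¹ else 0))⁻¹
      = (2*(2*(m : ℝ)+1)/((m : ℝ)+1)) •
          ((1 : Matrix (Fin (2*m)) (Fin (2*m)) ℝ) - ((2*m : ℝ))⁻¹ • Jmat (2*m)
            + ((2*(m : ℝ)+1)/(1 + 4*(m : ℝ)*((m : ℝ)+1)*(1-t))) •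
                (((2*m : ℝ))⁻¹ • Jmat (2*m)))
    ∧ (HmatB t (fun S : Finset (Fin (2*m)) =>
        if S.card = m then ((Nat.choose (2*m) m : ℝ))⁻¹ else 0))⁻¹
      = (2*(2*(m : ℝ)-1)/(m : ℝ)) •
          ((1 : Matrix (Fin (2*m)) (Fin (2*m)) ℝ) - ((2*m : ℝ))⁻¹ • Jmat (2*m))
        + (2/((m : ℝ)*(1-t))) • (((2*m : ℝ))⁻¹ • Jmat (2*m)) := by
  obtain ⟨n, rfl⟩ : ∃ n, m = n + 2 := ⟨m - 2, by omega⟩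
  clear hm
  have hN0 : (0:ℝ) ≤ (n:ℝ) := Nat.cast_nonneg n
  have h1t : (0:ℝ) < 1 - t := by linarith
  have h3 : ((n:ℝ)+3) ≠ 0 := by positivity
  have h5 : (2*(n:ℝ)+5) ≠ 0 := by positivity
  have h23 : (2*(n:ℝ)+3) ≠ 0 := by positivity
  have h24 : (2*(n:ℝ)+4) ≠ 0 := by positivity
  have h2' : ((n:ℝ)+2) ≠ 0 := by positivity
  have hD1pos : (0:ℝ) < 1 + 4*((n:ℝ)+2)*((n:ℝ)+3)*(1-t) := by
    have hp : (0:ℝ) < ((n:ℝ)+2)*((n:ℝ)+3) := by positivity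
    nlinarith [mul_pos hp h1t]
  have hD1 : (1 + 4*((n:ℝ)+2)*((n:ℝ)+3)*(1-t)) ≠ 0 := ne_of_gt hD1pos
  have h1tn : (1 - t) ≠ 0 := ne_of_gt h1t
  -- design 1 scalar data
  set a1 : ℝ := ((n:ℝ)+3)/(2*(n:ℝ)+5) - ((n:ℝ)+3)/(2*(2*(n:ℝ)+5)) with ha1
  set b1 : ℝ := ((n:ℝ)+3)/(2*(2*(n:ℝ)+5)) - t * (((n:ℝ)+3)/(2*(n:ℝ)+5))^2 with hb1
  set c1 : ℝ := 2*(2*(n:ℝ)+5)/((n:ℝ)+3) with hc1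
  set d1 : ℝ := 2*(2*(n:ℝ)+5)/((n:ℝ)+3)
      * ((2*(n:ℝ)+5)/(1 + 4*((n:ℝ)+2)*((n:ℝ)+3)*(1-t)) - 1) / (2*(n:ℝ)+4) with hd1
  have h1a : a1 * c1 = 1 := by
    rw [ha1, hc1]; field_simp; ring
  have h2a : a1 * d1 + b1 * c1 + b1 * d1 * ((2*(n+2) : ℕ) : ℝ) = 0 := by
    rw [ha1, hb1, hc1, hd1]; push_cast; field_simp; ring
  -- design 2 scalar data
  set a2 : ℝ := (1:ℝ)/2 - ((n:ℝ)+1)/(2*(2*(n:ℝ)+3)) with ha2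
  set b2 : ℝ := ((n:ℝ)+1)/(2*(2*(n:ℝ)+3)) - t * ((1:ℝ)/2)^2 with hb2
  set c2 : ℝ := 2*(2*(n:ℝ)+3)/((n:ℝ)+2) with hc2
  set d2 : ℝ := (2/(((n:ℝ)+2)*(1-t)) - 2*(2*(n:ℝ)+3)/((n:ℝ)+2)) / (2*(n:ℝ)+4) with hd2
  have h1b : a2 * c2 = 1 := by
    rw [ha2, hc2]; field_simp; ring
  have h2b : a2 * d2 + b2 * c2 + b2 * d2 * ((2*(n+2) : ℕ) : ℝ) = 0 := by
    rw [ha2, hb2, hc2, hd2]; push_cast; field_simp; ring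
  have hD1b : (1 + 4*((n:ℝ)+2)*((n:ℝ)+2+1)*(1-t)) ≠ 0 := by
    have e : (1 + 4*((n:ℝ)+2)*((n:ℝ)+2+1)*(1-t)) = 1 + 4*((n:ℝ)+2)*((n:ℝ)+3)*(1-t) := by ring
    rw [e]; exact hD1
  have h3b : ((n:ℝ)+2+1) ≠ 0 := by positivity
  have h24b : (2*((n:ℝ)+2)) ≠ 0 := by positivity
  have h21 : (2*((n:ℝ)+2)+1) ≠ 0 := by positivity
  have h2m1 : (2*((n:ℝ)+2)-1) ≠ 0 := by
    have : (0:ℝ) < 2*((n:ℝ)+2)-1 := by linarith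
    exact ne_of_gt this
  refine ⟨?_, ?_, ?_, ?_, ?_, ?_⟩
  · funext i
    simp only [gvecB_apply]
    rw [ev1_diag n i]
    push_cast; ring
  · funext i
    simp only [gvecB_apply]
    rw [ev2_diag n i]
  · rw [ev1_form n t]
    exact isUnit_aIbJ _ a1 b1 c1 d1 h1a h2a
  · rw [ev2_form n t]
    exact isUnit_aIbJ _ a2 b2 c2 d2 h1b h2b
  · rw [ev1_form n t, inv_aIbJ _ a1 b1 c1 d1 h1a h2a]
    push_cast
    match_scalars
    · rw [hc1]; ring
    · rw [hd1]; ring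
  · rw [ev2_form n t, inv_aIbJ _ a2 b2 c2 d2 h1b h2b]
    push_cast
    match_scalars
    · rw [hc2]; ring
    · rw [hd2]; ring
end

section
/- Let q = 2m with m ≥ 2 an integer and let 0 ≤ t < 1. Define l(j, t) = {(q−1)²(1−t)² − 1}(j−m)² − q(1−t)(j−m) and t_2(q) = 1 − (1/2)(q−1)⁻²[q + {4(q−1)² + q²}^{1/2}]. Then l(j, t) ≥ 0 for every integer j with 1 ≤ j ≤ q if and only if 0 ≤ t ≤ t_2(q). -/
set_option maxHeartbeats 2000000 in
theorem statement_18 (m : ℕ) (hm : 2 ≤ m) (t : ℝ) (ht0 : 0 ≤ t) (ht1 : t < 1) :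
    (∀ j : ℤ, 1 ≤ j → j ≤ (2*m : ℤ) →
        0 ≤ (((2*m : ℝ) - 1)^2 * (1 - t)^2 - 1) * ((j : ℝ) - m)^2
              - (2*m : ℝ) * (1 - t) * ((j : ℝ) - m))
    ↔ (0 ≤ t ∧ t ≤ 1 - (1/2) * (((2*m : ℝ) - 1)^2)⁻¹ *
        ((2*m : ℝ) + Real.sqrt (4 * ((2*m : ℝ) - 1)^2 + (2*m : ℝ)^2))) := by
  have hm' : (2:ℝ) ≤ (m:ℝ) := by exact_mod_cast hm
  set q : ℝ := 2*(m:ℝ) with hqdef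
  have hq4 : (4:ℝ) ≤ q := by rw [hqdef]; linarith
  set s : ℝ := 1 - t with hsdef
  have hs : 0 < s := by rw [hsdef]; linarith
  have hs1 : s ≤ 1 := by rw [hsdef]; linarith
  set a : ℝ := (q-1)^2 with hadef
  have ha0 : 0 < a := by rw [hadef]; nlinarith
  have h2a : (0:ℝ) < 2*a := by linarith
  set r : ℝ := Real.sqrt (4*a + q^2) with hrdef
  have hr2 : r^2 = 4*a + q^2 := Real.sq_sqrt (by positivity)
  have hr0 : 0 ≤ r := Real.sqrt_nonneg _
  clear_value q s a r
  have heq : (1:ℝ)/2 * a⁻¹ * (q+r) = (q+r)/(2*a) := by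
    field_simp
  constructor
  · intro h
    have h1 := h ((m:ℤ)+1) (by omega) (by omega)
    push_cast at h1
    have hq1 : q*s + 1 ≤ a*s^2 := by nlinarith [h1]
    refine ⟨ht0, ?_⟩
    have hsp : 0 < s*(2*a*s - q) := by nlinarith [mul_pos (show (0:ℝ) < q by linarith) hs]
    have hpos : 0 < 2*a*s - q := by nlinarith [hsp, hs]
    have h3 : 4*a + q^2 ≤ (2*a*s - q)^2 := by
      nlinarith [mul_nonneg ha0.le (by linarith : (0:ℝ) ≤ a*s^2 - q*s - 1)]
    have hrle : Real.sqrt (4*a + q^2) ≤ 2*a*s - q := by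
      have h4 := Real.sqrt_le_sqrt h3
      rwa [Real.sqrt_sq hpos.le] at h4
    rw [← hrdef] at hrle
    have hfr : (q+r)/(2*a) ≤ s := (div_le_iff₀ h2a).2 (by
      have hring : s*(2*a) = 2*a*s := by ring
      linarith [hrle, hring])
    rw [heq]
    rw [hsdef] at hfr
    linarith
  · rintro ⟨-, ht2⟩ j hj1 hj2
    rw [heq] at ht2
    have hfr : (q+r)/(2*a) ≤ s := by rw [hsdef]; linarith
    have hkey : q + r ≤ s*(2*a) := (div_le_iff₀ h2a).1 hfr
    have h2 : r ≤ 2*a*s - q := by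
      have hring : s*(2*a) = 2*a*s := by ring
      linarith [hkey, hring]
    have h3 : r^2 ≤ (2*a*s - q)^2 := pow_le_pow_left₀ hr0 h2 2
    rw [hr2] at h3
    have hquad : q*s + 1 ≤ a*s^2 := by nlinarith [h3, ha0]
    have hB : 0 < q*s := mul_pos (by linarith) hs
    rcases lt_trichotomy j (m:ℤ) with hlt | heqj | hgt
    · have hj : j ≤ (m:ℤ) - 1 := by omega
      have hjr : (j:ℝ) ≤ (m:ℝ) - 1 := by exact_mod_cast hj
      have hx : (j:ℝ) - m ≤ -1 := by linarith
      have hA : 0 < a*s^2 - 1 := by linarith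
      have h5 : q*s*((j:ℝ) - m) ≤ q*s*(-1) := mul_le_mul_of_nonneg_left hx hB.le
      linarith [mul_nonneg hA.le (sq_nonneg ((j:ℝ) - m)), h5, hB]
    · have hx : (j:ℝ) - m = 0 := by
        have : (j:ℝ) = (m:ℝ) := by exact_mod_cast heqj
        linarith
      rw [hx]; norm_num
    · have hj : (m:ℤ) + 1 ≤ j := by omega
      have hjr : (m:ℝ) + 1 ≤ (j:ℝ) := by exact_mod_cast hj
      have hx : 1 ≤ (j:ℝ) - m := by linarith
      have hA : 0 < a*s^2 - 1 := by linarith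
      have h5 : a*s^2 - 1 ≤ (a*s^2 - 1)*((j:ℝ) - m) :=
        le_mul_of_one_le_right hA.le hx
      have h6 : 0 ≤ ((j:ℝ) - m) * ((a*s^2 - 1)*((j:ℝ) - m) - q*s) :=
        mul_nonneg (by linarith) (by linarith)
      linarith [h6]
end
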